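/- Let A, B, C, A', B', C' be compact convex sets in ℝ². Suppose that for every choice of two sets X, Y from {A,B,C} (distinct) and one set Z from {A',B',C'}, the intersection X ∩ Y ∩ Z is nonempty. Then A ∩ B ∩ C ≠ ∅ or A' ∩ B' ∩ C' ≠ ∅. -/

import Mathlib

open Prod

/-- Lexicographically negative directions in the plane. -/
private def Dneg (d : ℝ × ℝ) : Prop := d.1 < 0 ∨ (d.1 = 0 ∧ d.2 < 0)

private lemma dneg_sub_iff {y x : ℝ × ℝ} : Dneg (y - x) ↔ toLex y < toLex x := by
  rw [Prod.Lex.lt_iff]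
  simp only [ofLex_toLex]
  unfold Dneg
  constructor
  · rintro (h | ⟨h1, h2⟩)
    · left; simpa [sub_neg] using h
    · right; exact ⟨by linarith [sub_eq_zero.mp h1, h1] , by simpa [sub_neg] using h2⟩
  · rintro (h | ⟨h1, h2⟩)
    · left; simpa [sub_neg] using h
    · right; exact ⟨by simp [h1], by simpa [sub_neg] using h2⟩

private lemma dneg_fst_nonpos {d : ℝ × ℝ} (h : Dneg d) : d.1 ≤ 0 := by
  rcases h with h | ⟨h, _⟩ <;> linarith

private lemma dneg_ne_zero {d : ℝ × ℝ} (h : Dneg d) : d ≠ 0 := by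
  rintro rfl
  rcases h with h | ⟨_, h⟩ <;> simp at h

/-- Lexicographic minimum of a nonempty compact set exists. -/
private lemma exists_lexmin {S : Set (ℝ × ℝ)} (hS : IsCompact S) (hne : S.Nonempty) :
    ∃ x ∈ S, ∀ y ∈ S, toLex x ≤ toLex y := by
  obtain ⟨x0, hx0S, hx0⟩ := hS.exists_isMinOn hne continuous_fst.continuousOn
  have hcl : IsClosed {p : ℝ × ℝ | p.1 = x0.1} := isClosed_eq continuous_fst continuous_const
  have hS2 : IsCompact (S ∩ {p | p.1 = x0.1}) := hS.inter_right hcl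
  obtain ⟨x, hxS2, hx⟩ := hS2.exists_isMinOn ⟨x0, hx0S, rfl⟩ continuous_snd.continuousOn
  refine ⟨x, hxS2.1, fun y hy => ?_⟩
  rw [Prod.Lex.le_iff]
  simp only [ofLex_toLex]
  have h1 : x0.1 ≤ y.1 := hx0 hy
  have hx1 : x.1 = x0.1 := hxS2.2
  rcases eq_or_lt_of_le h1 with he | hlt
  · right
    refine ⟨by rw [hx1, he], ?_⟩
    exact hx (Set.mem_inter hy he.symm)
  · left; rw [hx1]; exact hlt

/-- Key planar identity: `cross v w • u + cross w u • v + cross u v • w = 0`. -/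
private lemma cross_key (u v w : ℝ × ℝ) :
    (v.1*w.2 - v.2*w.1) • u + (w.1*u.2 - w.2*u.1) • v + (u.1*v.2 - u.2*v.1) • w = 0 := by
  apply Prod.ext <;> simp <;> ring

private lemma parallel_case {a b : ℝ × ℝ} (ha : Dneg a) (hb : Dneg b)
    (h : a.1 * b.2 - a.2 * b.1 = 0) : ∃ g l : ℝ, 0 < g ∧ 0 ≤ l ∧ g • b = l • a := by
  rcases ha with ha1 | ⟨ha1, ha2⟩
  · refine ⟨-a.1, -b.1, by linarith, by linarith [dneg_fst_nonpos hb], ?_⟩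
    apply Prod.ext <;> simp <;> nlinarith [h]
  · rw [ha1] at h
    have hb1 : b.1 = 0 := by
      have h' : a.2 * b.1 = 0 := by linarith
      rcases mul_eq_zero.mp h' with h'' | h''
      · linarith
      · exact h''
    have hb2 : b.2 < 0 := by
      rcases hb with hb1' | ⟨_, hb2⟩
      · linarith
      · exact hb2
    refine ⟨-a.2, -b.2, by linarith, by linarith, ?_⟩
    apply Prod.ext <;> simp [ha1, hb1] <;> ring

/-- Planar cone lemma: three lex-negative vectors, one is a nonneg combination
of the other two (in homogeneous form). -/
private lemma cone_of_dneg {u v w : ℝ × ℝ} (hu : Dneg u) (hv : Dneg v) (hw : Dneg w) :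
    (∃ g a b : ℝ, 0 < g ∧ 0 ≤ a ∧ 0 ≤ b ∧ g • u = a • v + b • w) ∨
    (∃ g a b : ℝ, 0 < g ∧ 0 ≤ a ∧ 0 ≤ b ∧ g • v = a • u + b • w) ∨
    (∃ g a b : ℝ, 0 < g ∧ 0 ≤ a ∧ 0 ≤ b ∧ g • w = a • u + b • v) := by
  set c1 := u.1*v.2 - u.2*v.1 with hc1def
  set c2 := v.1*w.2 - v.2*w.1 with hc2def
  set c3 := w.1*u.2 - w.2*u.1 with hc3def
  have key : c2 • u + c3 • v + c1 • w = 0 := cross_key u v w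
  rcases eq_or_ne c1 0 with h1 | h1
  · -- u, v parallel
    obtain ⟨g, l, hg, hl, he⟩ := parallel_case hu hv h1
    exact Or.inr (Or.inl ⟨g, l, 0, hg, hl, le_refl 0, by rw [he]; module⟩)
  rcases eq_or_ne c2 0 with h2 | h2
  · obtain ⟨g, l, hg, hl, he⟩ := parallel_case hv hw h2
    exact Or.inr (Or.inr ⟨g, 0, l, hg, le_refl 0, hl, by rw [he]; module⟩)
  rcases eq_or_ne c3 0 with h3 | h3
  · obtain ⟨g, l, hg, hl, he⟩ := parallel_case hw hu h3
    exact Or.inl ⟨g, 0, l, hg, le_refl 0, hl, by rw [he]; module⟩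
  -- contradiction helper for same-sign cases
  have contra : ¬ ((0 < c1 ∧ 0 < c2 ∧ 0 < c3) ∨ (c1 < 0 ∧ c2 < 0 ∧ c3 < 0)) := by
    rintro (⟨p1, p2, p3⟩ | ⟨p1, p2, p3⟩) <;>
    · have keyx : c2 * u.1 + c3 * v.1 + c1 * w.1 = 0 := by
        rw [hc1def, hc2def, hc3def]; ring
      have hu1 := dneg_fst_nonpos hu
      have hv1 := dneg_fst_nonpos hv
      have hw1 := dneg_fst_nonpos hw
      have hu1' : u.1 = 0 := by nlinarith
      have hv1' : v.1 = 0 := by nlinarith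
      have hu2 : u.2 < 0 := by
        rcases hu with h | ⟨_, h⟩ <;> [linarith; exact h]
      have hv2 : v.2 < 0 := by
        rcases hv with h | ⟨_, h⟩ <;> [linarith; exact h]
      rw [hc1def] at p1 <;> nlinarith
  rcases h1.lt_or_gt with s1 | s1 <;> rcases h2.lt_or_gt with s2 | s2 <;>
    rcases h3.lt_or_gt with s3 | s3
  · exact absurd (Or.inr ⟨s1, s2, s3⟩) contra
  · -- c1<0, c2<0, c3>0 : v case, g = c3
    exact Or.inr (Or.inl ⟨c3, -c2, -c1, s3, by linarith, by linarith, by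
      linear_combination (norm := module) key⟩)
  · -- c1<0, c2>0, c3<0 : u case, g = c2
    exact Or.inl ⟨c2, -c3, -c1, s2, by linarith, by linarith, by
      linear_combination (norm := module) key⟩
  · -- c1<0, c2>0, c3>0 : w case, g = -c1
    exact Or.inr (Or.inr ⟨-c1, c2, c3, by linarith, by linarith, by linarith, by
      linear_combination (norm := module) -key⟩)
  · -- c1>0, c2<0, c3<0 : w case, g = c1
    exact Or.inr (Or.inr ⟨c1, -c2, -c3, s1, by linarith, by linarith, by
      linear_combination (norm := module) key⟩)
  · -- c1>0, c2<0, c3>0 : u case, g = -c2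
    exact Or.inl ⟨-c2, c3, c1, by linarith, by linarith, by linarith, by
      linear_combination (norm := module) -key⟩
  · -- c1>0, c2>0, c3<0 : v case, g = -c3
    exact Or.inr (Or.inl ⟨-c3, c2, c1, by linarith, by linarith, by linarith, by
      linear_combination (norm := module) -key⟩)
  · exact absurd (Or.inl ⟨s1, s2, s3⟩) contra

/-- From a homogeneous cone relation, produce a common point lex-below `x`. -/
private lemma sub_point {Kc K1 K2 : Set (ℝ × ℝ)} (hKc : Convex ℝ Kc)
    (hK1 : Convex ℝ K1) (hK2 : Convex ℝ K2) {x a b mp : ℝ × ℝ}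
    (hxC : x ∈ Kc) (hx1 : x ∈ K1) (hx2 : x ∈ K2)
    (haC : a ∈ Kc) (hbC : b ∈ Kc) (hm1 : mp ∈ K1) (hm2 : mp ∈ K2)
    (hm : Dneg (mp - x))
    {g al be : ℝ} (hg : 0 < g) (hal : 0 ≤ al) (hbe : 0 ≤ be)
    (hcone : g • (mp - x) = al • (a - x) + be • (b - x)) :
    ∃ p, p ∈ Kc ∧ p ∈ K1 ∧ p ∈ K2 ∧ Dneg (p - x) := by
  have hab : 0 < al + be := by
    rcases (lt_or_eq_of_le (by positivity : (0:ℝ) ≤ al + be)) with h | h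
    · exact h
    · exfalso
      have hal0 : al = 0 := by linarith
      have hbe0 : be = 0 := by linarith
      rw [hal0, hbe0] at hcone
      simp at hcone
      rcases hcone with h' | h'
      · linarith
      · exact dneg_ne_zero hm (by simpa [sub_eq_zero] using sub_eq_zero.mpr (by
          have : mp - x = 0 := h'
          exact sub_eq_zero.mp this))
  set s := g + al + be with hs
  have hspos : 0 < s := by positivity
  set t := g / s with ht
  have ht0 : 0 < t := by positivity
  have ht1 : t ≤ 1 := by
    rw [ht, div_le_one hspos]; linarith
  set p := x + t • (mp - x) with hp
  have hdp : Dneg (p - x) := by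
    have hpx : p - x = t • (mp - x) := by rw [hp]; abel
    rcases hm with h | ⟨h1, h2⟩
    · left; rw [hpx]; simpa using mul_neg_of_pos_of_neg ht0 h
    · right
      constructor
      · rw [hpx]; simp [h1]
      · rw [hpx]; simpa using mul_neg_of_pos_of_neg ht0 h2
  have hrep1 : p = (1 - t) • x + t • mp := by rw [hp]; module
  have hp1 : p ∈ K1 := by
    rw [hrep1]; exact hK1 hx1 hm1 (by linarith) (le_of_lt ht0) (by ring)
  have hp2 : p ∈ K2 := by
    rw [hrep1]; exact hK2 hx2 hm2 (by linarith) (le_of_lt ht0) (by ring)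
  have hpC : p ∈ Kc := by
    have hy : (al/(al+be)) • a + (be/(al+be)) • b ∈ Kc :=
      hKc haC hbC (by positivity) (by positivity) (by field_simp)
    have hrep2 : p = (g/s) • x + ((al+be)/s) • ((al/(al+be)) • a + (be/(al+be)) • b) := by
      have h1 : t • (mp - x) = (s⁻¹ * al) • (a - x) + (s⁻¹ * be) • (b - x) := by
        rw [ht, div_eq_mul_inv, mul_comm, mul_smul, hcone]; module
      rw [hp, h1]
      apply Prod.ext <;> simp <;> field_simp <;> ring
    rw [hrep2]
    refine hKc hxC hy (by positivity) (by positivity) (by field_simp; ring)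
  exact ⟨p, hpC, hp1, hp2, hdp⟩

/-- Basis lemma: the lex-min of a triple intersection is the lex-min of a pair. -/
private lemma basis_lemma {K1 K2 K3 : Set (ℝ × ℝ)} (h1 : Convex ℝ K1) (h2 : Convex ℝ K2)
    (h3 : Convex ℝ K3) {x : ℝ × ℝ} (hx1 : x ∈ K1) (hx2 : x ∈ K2) (hx3 : x ∈ K3)
    (hmin : ∀ y, y ∈ K1 → y ∈ K2 → y ∈ K3 → toLex x ≤ toLex y) :
    (∀ y, y ∈ K1 → y ∈ K2 → toLex x ≤ toLex y) ∨
    (∀ y, y ∈ K2 → y ∈ K3 → toLex x ≤ toLex y) ∨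
    (∀ y, y ∈ K1 → y ∈ K3 → toLex x ≤ toLex y) := by
  by_contra hcon
  push_neg at hcon
  obtain ⟨⟨u, hu1, hu2, hu⟩, ⟨v, hv2, hv3, hv⟩, ⟨w, hw1, hw3, hw⟩⟩ := hcon
  have hdu : Dneg (u - x) := dneg_sub_iff.mpr hu
  have hdv : Dneg (v - x) := dneg_sub_iff.mpr hv
  have hdw : Dneg (w - x) := dneg_sub_iff.mpr hw
  have hfin : ∃ p, p ∈ K1 ∧ p ∈ K2 ∧ p ∈ K3 ∧ Dneg (p - x) := by
    rcases cone_of_dneg hdu hdv hdw with ⟨g,a,b,hg,ha,hb,he⟩ | ⟨g,a,b,hg,ha,hb,he⟩ |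
      ⟨g,a,b,hg,ha,hb,he⟩
    · -- u is combo of v, w; cone set K3 (contains x, v, w); u ∈ K1 ∩ K2
      obtain ⟨p, hpC, hp1, hp2, hd⟩ :=
        sub_point h3 h1 h2 hx3 hx1 hx2 hv3 hw3 hu1 hu2 hdu hg ha hb he
      exact ⟨p, hp1, hp2, hpC, hd⟩
    · -- v is combo of u, w; cone set K1; v ∈ K2 ∩ K3
      obtain ⟨p, hpC, hp2, hp3, hd⟩ :=
        sub_point h1 h2 h3 hx1 hx2 hx3 hu1 hw1 hv2 hv3 hdv hg ha hb he
      exact ⟨p, hpC, hp2, hp3, hd⟩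
    · -- w is combo of u, v; cone set K2; w ∈ K1 ∩ K3
      obtain ⟨p, hpC, hp1, hp3, hd⟩ :=
        sub_point h2 h1 h3 hx2 hx1 hx3 hu2 hv2 hw1 hw3 hdw hg ha hb he
      exact ⟨p, hp1, hpC, hp3, hd⟩
  obtain ⟨p, hp1, hp2, hp3, hd⟩ := hfin
  exact absurd (hmin p hp1 hp2 hp3) (not_le.mpr (dneg_sub_iff.mp hd))

/-- Colorful-Helly consequence: if every mixed triple (two distinct sets among
`{A,B,C}` and one set among `{A',B',C'}`) has a common point, then
`A ∩ B ∩ C ≠ ∅` or `A' ∩ B' ∩ C' ≠ ∅`. -/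
theorem colorful_mixed_triples (A B C A' B' C' : Set (ℝ × ℝ))
    (hAcp : IsCompact A) (hBcp : IsCompact B) (hCcp : IsCompact C)
    (hA'cp : IsCompact A') (hB'cp : IsCompact B') (hC'cp : IsCompact C')
    (hAcv : Convex ℝ A) (hBcv : Convex ℝ B) (hCcv : Convex ℝ C)
    (hA'cv : Convex ℝ A') (hB'cv : Convex ℝ B') (hC'cv : Convex ℝ C')
    (hmix : ∀ Z ∈ ({A', B', C'} : Set (Set (ℝ × ℝ))),
      (A ∩ B ∩ Z).Nonempty ∧ (B ∩ C ∩ Z).Nonempty ∧ (C ∩ A ∩ Z).Nonempty) :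
    (A ∩ B ∩ C).Nonempty ∨ (A' ∩ B' ∩ C').Nonempty := by
  classical
  set S : Fin 3 → Set (ℝ × ℝ) := ![A, B, C] with hSdef
  set S' : Fin 3 → Set (ℝ × ℝ) := ![A', B', C'] with hS'def
  have hScv : ∀ i, Convex ℝ (S i) := by
    intro i; fin_cases i <;> simpa [hSdef]
  have hS'cv : ∀ i, Convex ℝ (S' i) := by
    intro i; fin_cases i <;> simpa [hS'def]
  have hScp : ∀ i, IsCompact (S i) := by
    intro i; fin_cases i <;> simpa [hSdef]
  have hS'cp : ∀ i, IsCompact (S' i) := by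
    intro i; fin_cases i <;> simpa [hS'def]
  have hmix' : ∀ k, (A ∩ B ∩ S' k).Nonempty ∧ (B ∩ C ∩ S' k).Nonempty ∧
      (C ∩ A ∩ S' k).Nonempty := by
    intro k
    fin_cases k
    · exact hmix A' (by simp)
    · exact hmix B' (by simp)
    · exact hmix C' (by simp)
  have hT : ∀ i j k, (S i ∩ S j ∩ S' k).Nonempty := by
    intro i j k
    obtain ⟨h1, h2, h3⟩ := hmix' k
    fin_cases i <;> fin_cases j
    · exact h1.mono (fun p hp => ⟨⟨hp.1.1, hp.1.1⟩, hp.2⟩)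
    · exact h1
    · exact h3.mono (fun p hp => ⟨⟨hp.1.2, hp.1.1⟩, hp.2⟩)
    · exact h1.mono (fun p hp => ⟨⟨hp.1.2, hp.1.1⟩, hp.2⟩)
    · exact h1.mono (fun p hp => ⟨⟨hp.1.2, hp.1.2⟩, hp.2⟩)
    · exact h2
    · exact h3
    · exact h2.mono (fun p hp => ⟨⟨hp.1.2, hp.1.1⟩, hp.2⟩)
    · exact h2.mono (fun p hp => ⟨⟨hp.1.2, hp.1.2⟩, hp.2⟩)
  have hmins : ∀ t : Fin 3 × Fin 3 × Fin 3,
      ∃ x ∈ S t.1 ∩ S t.2.1 ∩ S' t.2.2,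
        ∀ y ∈ S t.1 ∩ S t.2.1 ∩ S' t.2.2, toLex x ≤ toLex y := by
    intro t
    exact exists_lexmin
      (((hScp t.1).inter_right (hScp t.2.1).isClosed).inter_right (hS'cp t.2.2).isClosed)
      (hT t.1 t.2.1 t.2.2)
  choose m hmem hmin using hmins
  obtain ⟨t0, -, hmax⟩ := Finset.exists_max_image Finset.univ (fun t => toLex (m t))
    ⟨((0 : Fin 3), (0 : Fin 3), (0 : Fin 3)), Finset.mem_univ _⟩
  obtain ⟨i, j, k⟩ := t0
  set x := m (i, j, k) with hxdef
  have hx := hmem (i, j, k)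
  have hxi : x ∈ S i := hx.1.1
  have hxj : x ∈ S j := hx.1.2
  have hxk : x ∈ S' k := hx.2
  have hminx : ∀ y, y ∈ S i → y ∈ S j → y ∈ S' k → toLex x ≤ toLex y := by
    intro y hy1 hy2 hy3
    exact hmin (i, j, k) y ⟨⟨hy1, hy2⟩, hy3⟩
  have hmax' : ∀ t, toLex (m t) ≤ toLex x := fun t => hmax t (Finset.mem_univ t)
  rcases basis_lemma (hScv i) (hScv j) (hS'cv k) hxi hxj hxk hminx with hc | hc | hc
  · -- x is lexmin of S i ∩ S j : x ∈ every S' k'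
    right
    have hk' : ∀ k', x ∈ S' k' := by
      intro k'
      have h1 : toLex (m (i, j, k')) ≤ toLex x := hmax' (i, j, k')
      have hmem' := hmem (i, j, k')
      have h2 : toLex x ≤ toLex (m (i, j, k')) := hc _ hmem'.1.1 hmem'.1.2
      have : m (i, j, k') = x := toLex_inj.mp (le_antisymm h1 h2)
      rw [← this]; exact hmem'.2
    have h0 := hk' 0; have h1 := hk' 1; have h2 := hk' 2
    simp only [hS'def] at h0 h1 h2
    exact ⟨x, ⟨h0, h1⟩, h2⟩
  · -- x is lexmin of S j ∩ S' k : x ∈ every S i'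
    left
    have hi' : ∀ i', x ∈ S i' := by
      intro i'
      have h1 : toLex (m (i', j, k)) ≤ toLex x := hmax' (i', j, k)
      have hmem' := hmem (i', j, k)
      have h2 : toLex x ≤ toLex (m (i', j, k)) := hc _ hmem'.1.2 hmem'.2
      have : m (i', j, k) = x := toLex_inj.mp (le_antisymm h1 h2)
      rw [← this]; exact hmem'.1.1
    have h0 := hi' 0; have h1 := hi' 1; have h2 := hi' 2
    simp only [hSdef] at h0 h1 h2
    exact ⟨x, ⟨h0, h1⟩, h2⟩
  · -- x is lexmin of S i ∩ S' k : x ∈ every S j'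
    left
    have hj' : ∀ j', x ∈ S j' := by
      intro j'
      have h1 : toLex (m (i, j', k)) ≤ toLex x := hmax' (i, j', k)
      have hmem' := hmem (i, j', k)
      have h2 : toLex x ≤ toLex (m (i, j', k)) := hc _ hmem'.1.1 hmem'.2
      have : m (i, j', k) = x := toLex_inj.mp (le_antisymm h1 h2)
      rw [← this]; exact hmem'.1.2
    have h0 := hj' 0; have h1 := hj' 1; have h2 := hj' 2
    simp only [hSdef] at h0 h1 h2
    exact ⟨x, ⟨h0, h1⟩, h2⟩
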